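/- Let n ≥ 1 and A as above (nonzero entries in [1/(2n), 1/(2n) + 1/(2n^2)]). If permutations σ and τ satisfy c(σ) < c(τ) (τ matches strictly more nonzero entries), then w(σ) < w(τ). In particular w(σ) > w(τ) implies c(σ) ≥ c(τ). -/
import Mathlib

lemma key_3 (n : ℕ) (hn : 1 ≤ n) (A : Matrix (Fin n) (Fin n) ℝ)
    (hA : ∀ i j, A i j ≠ 0 → 1 / (2 * n) ≤ A i j ∧ A i j ≤ 1 / (2 * n) + 1 / (2 * n ^ 2))
    (σ τ : Equiv.Perm (Fin n))
    (h : {i : Fin n | A i (σ i) ≠ 0}.ncard < {i : Fin n | A i (τ i) ≠ 0}.ncard) :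
    ∑ i, A i (σ i) < ∑ i, A i (τ i) := by
  set S := Finset.univ.filter (fun i => A i (σ i) ≠ 0) with hS
  set T := Finset.univ.filter (fun i => A i (τ i) ≠ 0) with hT
  have hcS : {i : Fin n | A i (σ i) ≠ 0}.ncard = S.card := by
    simp [hS, Set.ncard_eq_toFinset_card', Set.toFinset_setOf]
  have hcT : {i : Fin n | A i (τ i) ≠ 0}.ncard = T.card := by
    simp [hT, Set.ncard_eq_toFinset_card', Set.toFinset_setOf]
  rw [hcS, hcT] at h
  have hsS : ∑ i, A i (σ i) = ∑ i ∈ S, A i (σ i) :=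
    (Finset.sum_filter_ne_zero _).symm
  have hsT : ∑ i, A i (τ i) = ∑ i ∈ T, A i (τ i) :=
    (Finset.sum_filter_ne_zero _).symm
  have hnR : (1 : ℝ) ≤ (n : ℝ) := by exact_mod_cast hn
  have hub : ∑ i ∈ S, A i (σ i) ≤ S.card * (1 / (2 * n) + 1 / (2 * n ^ 2)) := by
    have := Finset.sum_le_card_nsmul S (fun i => A i (σ i)) (1 / (2 * n) + 1 / (2 * n ^ 2))
      (fun i hi => (hA i (σ i) (Finset.mem_filter.mp hi).2).2)
    simpa [nsmul_eq_mul, mul_add] using this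
  have hlb : (T.card : ℝ) * (1 / (2 * n)) ≤ ∑ i ∈ T, A i (τ i) := by
    have := Finset.card_nsmul_le_sum T (fun i => A i (τ i)) (1 / (2 * n))
      (fun i hi => (hA i (τ i) (Finset.mem_filter.mp hi).2).1)
    simpa [nsmul_eq_mul] using this
  have hSn : S.card + 1 ≤ n := by
    have := T.card_le_univ
    simp only [Finset.card_univ, Fintype.card_fin] at this
    omega
  have hST : (S.card : ℝ) + 1 ≤ (T.card : ℝ) := by exact_mod_cast h
  have hSnR : (S.card : ℝ) + 1 ≤ (n : ℝ) := by exact_mod_cast hSn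
  have hnpos : (0 : ℝ) < (n : ℝ) := by linarith
  rw [hsS, hsT]
  have hmid : (S.card : ℝ) * (1 / (2 * n) + 1 / (2 * n ^ 2)) < (T.card : ℝ) * (1 / (2 * n)) := by
    have hne : (n : ℝ) ≠ 0 := ne_of_gt hnpos
    rw [div_add_div _ _ (by positivity) (by positivity), mul_div_assoc', mul_one_div,
      div_lt_div_iff₀ (by positivity) (by positivity)]
    nlinarith [mul_le_mul_of_nonneg_right hST (by positivity : (0:ℝ) ≤ 4 * (n:ℝ) ^ 3),
      mul_le_mul_of_nonneg_right hSnR (by positivity : (0:ℝ) ≤ 4 * (n:ℝ) ^ 2)]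
  linarith
theorem stmt_3 (n : ℕ) (hn : 1 ≤ n) (A : Matrix (Fin n) (Fin n) ℝ)
    (hA : ∀ i j, A i j ≠ 0 → 1 / (2 * n) ≤ A i j ∧ A i j ≤ 1 / (2 * n) + 1 / (2 * n ^ 2)) :
    (∀ σ τ : Equiv.Perm (Fin n),
        {i : Fin n | A i (σ i) ≠ 0}.ncard < {i : Fin n | A i (τ i) ≠ 0}.ncard →
        ∑ i, A i (σ i) < ∑ i, A i (τ i)) ∧
    (∀ σ τ : Equiv.Perm (Fin n),
        ∑ i, A i (τ i) < ∑ i, A i (σ i) →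
        {i : Fin n | A i (τ i) ≠ 0}.ncard ≤ {i : Fin n | A i (σ i) ≠ 0}.ncard) := by
  refine ⟨key_3 n hn A hA, fun σ τ hw => ?_⟩
  by_contra hc
  exact absurd (key_3 n hn A hA σ τ (not_le.mp hc)) (not_lt.mpr hw.le)
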